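/- Theorem 3 / Appendix G (characteristic polynomial of the interleaved-LRB transition matrix): for every integer n ≥ 1, all reals ε, p̄, and every real λ, det(Q − λ·I) = (1 − λ) · (λ_1 − λ)^{n−1} · (λ_2 − λ), where λ_1 = 1 − 2(ε + p̄) + 2^{n+1} p̄ ε = 1 − 2B − nC and λ_2 = 1 − (n+2)(ε + p̄) + (n+1)(n+2) 2^n p̄ ε = 1 − (n+2)B. -/

import Mathlib

open Matrix Finset

noncomputable section

def Qil (n : ℕ) (B C : ℝ) : Matrix (Fin (n + 1)) (Fin (n + 1)) ℝ :=
  Matrix.of fun a b =>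
    Fin.cases (motive := fun _ => ℝ)
      (Fin.cases (motive := fun _ => ℝ) (1 - (n : ℝ) * B) (fun _ => 2 * B) b)
      (fun i =>
        Fin.cases (motive := fun _ => ℝ) B
          (fun j => if i = j then 1 - 2 * B - ((n : ℝ) - 1) * C else C) b)
      a

/-! ### Auxiliary matrices -/

def Pm (m : ℕ) : Matrix (Fin (m+2)) (Fin (m+2)) ℝ :=
  Matrix.of fun a b =>
    if b = 0 then (if a = 0 then 1 else 0)
    else if b = 1 then (if a = 0 then -((m:ℝ)+1) else 1)
    else (if a = 1 then 1 else 0) - (if a = b then 1 else 0)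

def Rm (m : ℕ) : Matrix (Fin (m+2)) (Fin (m+2)) ℝ :=
  Matrix.of fun a b =>
    if b = 0 then (if a = 0 then 1 else 0)
    else if a = 0 then 1
    else ((m:ℝ)+1)⁻¹ - (if a = b ∧ ¬ b = 1 then 1 else 0)

def Tm (m : ℕ) (B C lam : ℝ) : Matrix (Fin (m+2)) (Fin (m+2)) ℝ :=
  Matrix.of fun a b =>
    if b = 0 then (if a = 0 then 1 - lam else if a = 1 then B else 0)
    else if a = b then (if a = 1 then 1 - ((m:ℝ)+3)*B - lam else 1 - 2*B - ((m:ℝ)+1)*C - lam)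
    else 0

lemma succ_succ_ne_one {m : ℕ} (j : Fin m) : (j.succ.succ : Fin (m+2)) ≠ 1 := by
  simp [Fin.ext_iff]

lemma one_ne_succ_succ {m : ℕ} (j : Fin m) : (1 : Fin (m+2)) ≠ j.succ.succ :=
  (succ_succ_ne_one j).symm

lemma zero_ne_succ {k : ℕ} (j : Fin k) : (0 : Fin (k+1)) ≠ j.succ :=
  (Fin.succ_ne_zero j).symm

lemma mcast (m : ℕ) : ((m:ℝ) + 1) ≠ 0 := by positivity


lemma qil_cases_one {m : ℕ} (x : ℝ) (f : Fin (m+1) → ℝ) :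
    (Fin.cases (motive := fun _ => ℝ) x f (1 : Fin (m+2))) = f 0 := by
  rw [← Fin.succ_zero_eq_one, Fin.cases_succ]

lemma sum_if_left {k : ℕ} (j : Fin k) (x c : ℝ) :
    ∑ i : Fin k, (if j = i then x else c) = x - c + k * c := by
  have h : ∀ i : Fin k, (if j = i then x else c) = c + (if j = i then x - c else 0) := by
    intro i; split <;> ring
  rw [Finset.sum_congr rfl fun i _ => h i, Finset.sum_add_distrib, Finset.sum_ite_eq]
  simp [Finset.card_univ]; ring

lemma sum_if_right {k : ℕ} (j : Fin k) (x c : ℝ) :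
    ∑ i : Fin k, (if i = j then x else c) = x - c + k * c := by
  rw [← sum_if_left j x c]
  refine Finset.sum_congr rfl fun i _ => ?_
  by_cases h : i = j
  · simp [h]
  · simp [h, Ne.symm h]

lemma hRP (m : ℕ) : Rm m * Pm m = 1 := by
  ext a b
  rw [Matrix.mul_apply]
  induction b using Fin.cases with
  | zero =>
    induction a using Fin.cases with
    | zero => simp [Rm, Pm, Fin.sum_univ_succ, Matrix.one_apply]
    | succ i => simp [Rm, Pm, Fin.sum_univ_succ, Matrix.one_apply, Fin.succ_ne_zero]
  | succ b =>
    induction b using Fin.cases with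
    | zero =>
      induction a using Fin.cases with
      | zero =>
        simp [Rm, Pm, Fin.sum_univ_succ, Matrix.one_apply, Fin.succ_ne_zero, zero_ne_succ,
          Fin.succ_zero_eq_one, succ_succ_ne_one, one_ne_succ_succ]
      | succ a =>
        induction a using Fin.cases with
        | zero =>
          have hf : ∀ x : Fin (m+1), ¬((1 : Fin (m+2)) = x.succ ∧ ¬ x.succ = (1 : Fin (m+2))) :=
            fun x ⟨h1, h2⟩ => h2 h1.symm
          simp [Rm, Pm, Fin.sum_univ_succ, Matrix.one_apply, Fin.succ_ne_zero, zero_ne_succ,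
            Fin.succ_zero_eq_one, succ_succ_ne_one, one_ne_succ_succ, hf,
            mul_inv_cancel₀ (mcast m)]
        | succ a =>
          have hf : ∀ x : Fin (m+1),
              ((a.succ = x ∧ ¬ x.succ = (1 : Fin (m+2)))) ↔ x = a.succ := by
            intro x
            constructor
            · rintro ⟨h, -⟩; exact h.symm
            · rintro rfl; exact ⟨rfl, succ_succ_ne_one a⟩
          simp [Rm, Pm, Fin.sum_univ_succ, Matrix.one_apply, Fin.succ_ne_zero, zero_ne_succ,
            Fin.succ_zero_eq_one, succ_succ_ne_one, one_ne_succ_succ, hf,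
            Fin.succ_inj, Finset.filter_eq', mul_inv_cancel₀ (mcast m)]
    | succ b =>
      induction a using Fin.cases with
      | zero =>
        simp [Rm, Pm, Fin.sum_univ_succ, Matrix.one_apply, Fin.succ_ne_zero, zero_ne_succ,
          Fin.succ_zero_eq_one, succ_succ_ne_one, one_ne_succ_succ]
      | succ a =>
        induction a using Fin.cases with
        | zero =>
          simp [Rm, Pm, Fin.sum_univ_succ, Matrix.one_apply, Fin.succ_ne_zero, zero_ne_succ,
            Fin.succ_zero_eq_one, succ_succ_ne_one, one_ne_succ_succ]
          try ring
        | succ a =>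
          simp [Rm, Pm, Fin.sum_univ_succ, Matrix.one_apply, Fin.succ_ne_zero, zero_ne_succ,
            Fin.succ_zero_eq_one, succ_succ_ne_one, one_ne_succ_succ, Fin.succ_inj]

lemma hMP (m : ℕ) (B C lam : ℝ) :
    (Qil (m+1) B C - lam • (1 : Matrix (Fin (m+2)) (Fin (m+2)) ℝ)) * Pm m
      = Pm m * Tm m B C lam := by
  ext a b
  rw [Matrix.mul_apply, Matrix.mul_apply]
  induction b using Fin.cases with
  | zero =>
    induction a using Fin.cases with
    | zero =>
      simp [Qil, Pm, Tm, Fin.sum_univ_succ, Matrix.one_apply, Fin.succ_ne_zero, zero_ne_succ,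
        Fin.succ_zero_eq_one, succ_succ_ne_one, one_ne_succ_succ, Fin.succ_inj,
            qil_cases_one, sum_if_left, sum_if_right]
      try ring
    | succ a =>
      induction a using Fin.cases with
      | zero =>
        simp [Qil, Pm, Tm, Fin.sum_univ_succ, Matrix.one_apply, Fin.succ_ne_zero, zero_ne_succ,
          Fin.succ_zero_eq_one, succ_succ_ne_one, one_ne_succ_succ, Fin.succ_inj,
            qil_cases_one, sum_if_left, sum_if_right]
        try ring
      | succ a =>
        simp [Qil, Pm, Tm, Fin.sum_univ_succ, Matrix.one_apply, Fin.succ_ne_zero, zero_ne_succ,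
          Fin.succ_zero_eq_one, succ_succ_ne_one, one_ne_succ_succ, Fin.succ_inj,
            qil_cases_one, sum_if_left, sum_if_right]
        try ring
  | succ b =>
    induction b using Fin.cases with
    | zero =>
      induction a using Fin.cases with
      | zero =>
        simp [Qil, Pm, Tm, Fin.sum_univ_succ, Matrix.one_apply, Fin.succ_ne_zero, zero_ne_succ,
          Fin.succ_zero_eq_one, succ_succ_ne_one, one_ne_succ_succ, Fin.succ_inj,
            qil_cases_one, sum_if_left, sum_if_right]
        try ring
      | succ a =>
        induction a using Fin.cases with
        | zero =>
          simp [Qil, Pm, Tm, Fin.sum_univ_succ, Matrix.one_apply, Fin.succ_ne_zero, zero_ne_succ,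
            Fin.succ_zero_eq_one, succ_succ_ne_one, one_ne_succ_succ, Fin.succ_inj,
            qil_cases_one, sum_if_left, sum_if_right]
          try ring
        | succ a =>
          simp [Qil, Pm, Tm, Fin.sum_univ_succ, Matrix.one_apply, Fin.succ_ne_zero, zero_ne_succ,
            Fin.succ_zero_eq_one, succ_succ_ne_one, one_ne_succ_succ, Fin.succ_inj,
            qil_cases_one, sum_if_left, sum_if_right]
          try ring
    | succ b =>
      induction a using Fin.cases with
      | zero =>
        simp [Qil, Pm, Tm, Fin.sum_univ_succ, Matrix.one_apply, Fin.succ_ne_zero, zero_ne_succ,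
          Fin.succ_zero_eq_one, succ_succ_ne_one, one_ne_succ_succ, Fin.succ_inj,
            qil_cases_one, sum_if_left, sum_if_right]
        try ring
      | succ a =>
        induction a using Fin.cases with
        | zero =>
          simp [Qil, Pm, Tm, Fin.sum_univ_succ, Matrix.one_apply, Fin.succ_ne_zero, zero_ne_succ,
            Fin.succ_zero_eq_one, succ_succ_ne_one, one_ne_succ_succ, Fin.succ_inj,
            qil_cases_one, sum_if_left, sum_if_right]
          try ring
        | succ a =>
          simp [Qil, Pm, Tm, Fin.sum_univ_succ, Matrix.one_apply, Fin.succ_ne_zero, zero_ne_succ,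
            Fin.succ_zero_eq_one, succ_succ_ne_one, one_ne_succ_succ, Fin.succ_inj,
            qil_cases_one, sum_if_left, sum_if_right]
          by_cases h : a = b <;> simp [h] <;> ring

lemma detT (m : ℕ) (B C lam : ℝ) :
    (Tm m B C lam).det
      = (1 - lam) * (1 - 2*B - ((m:ℝ)+1)*C - lam) ^ m * (1 - ((m:ℝ)+3)*B - lam) := by
  rw [Matrix.det_of_lowerTriangular _ (by
    intro i j h
    have hj0 : j ≠ 0 := by
      intro hj; subst hj; exact absurd (lt_of_le_of_lt (Fin.zero_le i) h) (lt_irrefl _)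
    have hij : ¬ i = j := ne_of_lt h
    simp [Tm, hj0, hij])]
  rw [Fin.prod_univ_succ, Fin.prod_univ_succ]
  simp [Tm, Fin.succ_zero_eq_one, succ_succ_ne_one, Fin.succ_ne_zero, zero_ne_succ,
    Finset.prod_const, Finset.card_univ]
  ring

lemma key (m : ℕ) (B C lam : ℝ) :
    (Qil (m+1) B C - lam • (1 : Matrix (Fin (m+2)) (Fin (m+2)) ℝ)).det
      = (1 - lam) * (1 - 2*B - ((m:ℝ)+1)*C - lam) ^ m * (1 - ((m:ℝ)+3)*B - lam) := by
  have h1 := congrArg Matrix.det (hMP m B C lam)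
  rw [Matrix.det_mul, Matrix.det_mul] at h1
  have h2 : (Rm m).det * (Pm m).det = 1 := by rw [← Matrix.det_mul, hRP]; simp
  have hP : (Pm m).det ≠ 0 := fun h => by simp [h] at h2
  rw [mul_comm (Pm m).det] at h1
  have h3 := mul_right_cancel₀ hP h1
  rw [h3, detT]

/-- Theorem 3 / Appendix G (characteristic polynomial of the interleaved-LRB
transition matrix): with B = ε + p̄ − (n+1)2ⁿp̄ε and C = 2^{n+1}p̄ε,
det(Q − λI) = (1 − λ)(λ₁ − λ)^{n−1}(λ₂ − λ), where
λ₁ = 1 − 2(ε + p̄) + 2^{n+1}p̄ε = 1 − 2B − nC and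
λ₂ = 1 − (n+2)(ε + p̄) + (n+1)(n+2)2ⁿp̄ε = 1 − (n+2)B. -/
theorem ilrb_charpoly (n : ℕ) (hn : 1 ≤ n) (ε pbar lam : ℝ) :
    (Qil n (ε + pbar - ((n : ℝ) + 1) * 2 ^ n * pbar * ε) (2 ^ (n + 1) * pbar * ε) -
          lam • (1 : Matrix (Fin (n + 1)) (Fin (n + 1)) ℝ)).det =
        (1 - lam) * ((1 - 2 * (ε + pbar) + 2 ^ (n + 1) * pbar * ε) - lam) ^ (n - 1) *
          ((1 - ((n : ℝ) + 2) * (ε + pbar) +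
              ((n : ℝ) + 1) * ((n : ℝ) + 2) * 2 ^ n * pbar * ε) - lam) ∧
      1 - 2 * (ε + pbar) + 2 ^ (n + 1) * pbar * ε =
        1 - 2 * (ε + pbar - ((n : ℝ) + 1) * 2 ^ n * pbar * ε) -
          (n : ℝ) * (2 ^ (n + 1) * pbar * ε) ∧
      1 - ((n : ℝ) + 2) * (ε + pbar) +
          ((n : ℝ) + 1) * ((n : ℝ) + 2) * 2 ^ n * pbar * ε =
        1 - ((n : ℝ) + 2) * (ε + pbar - ((n : ℝ) + 1) * 2 ^ n * pbar * ε) := by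
  obtain ⟨m, rfl⟩ : ∃ m, n = m + 1 := ⟨n - 1, by omega⟩
  refine ⟨?_, by push_cast; ring, by push_cast; ring⟩
  rw [key m _ _ lam]
  rw [show m + 1 - 1 = m from rfl]
  push_cast
  ring
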